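/- Let 0 < α < 1, let u ∈ L¹([a,b],ℝⁿ), and let x : [a,b] → ℝⁿ be a continuous function such that x(t) = x(a) + ∫_a^t ((t−s)^{α−1}/Γ(α)) u(s) ds for almost every t ∈ [a,b] (so u is the Caputo fractional derivative of order α of x). Suppose there exist real numbers a ≤ c < d ≤ b such that each component of x coincides on [c,d] with a polynomial function, and u(t) = 0 for almost every t ∈ [c,d]. Then x is constant on [a,d], i.e. x(t) = x(a) for all t ∈ [a,d]. -/

import Mathlib

open MeasureTheory Set Filter intervalIntegral Complex Metric

lemma aux_slit {c : ℝ} {x : ℂ} (hx : c < x.re) {s : ℝ} (hs : s ≤ c) :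
    (x - (s:ℂ)) ∈ slitPlane := by
  rw [Complex.mem_slitPlane_iff]
  left
  simp only [Complex.sub_re, Complex.ofReal_re]
  linarith

lemma aux_kernel_meas {a c : ℝ} (f : ℝ → ℝ)
    (hf : AEStronglyMeasurable f (volume.restrict (Ioc a c))) (γ : ℂ) (x : ℂ) (hx : c < x.re) :
    AEStronglyMeasurable (fun s : ℝ => ((x - s) ^ γ) * (f s : ℂ))
      (volume.restrict (Ioc a c)) := by
  apply AEStronglyMeasurable.mul
  · apply ContinuousOn.aestronglyMeasurable _ measurableSet_Ioc
    intro s hs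
    have h1 : ContinuousAt (fun z : ℂ => z ^ γ) (x - (s:ℂ)) :=
      continuousAt_cpow_const (aux_slit hx hs.2)
    have h2 : ContinuousAt (fun s : ℝ => x - (s:ℂ)) s :=
      (continuous_const.sub Complex.continuous_ofReal).continuousAt
    exact (ContinuousAt.comp (f := fun s : ℝ => x - (s:ℂ)) h1 h2).continuousWithinAt
  · exact (Complex.continuous_ofReal.comp_aestronglyMeasurable hf)

lemma aux_abs_le {c : ℝ} {x : ℂ} (hx : c < x.re) {s : ℝ} (hs : s ≤ c) (γ : ℝ) (hγ : γ ≤ 0) :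
    ‖(x - (s:ℂ)) ^ (γ:ℂ)‖ ≤ (x.re - c) ^ γ := by
  have h1 : (0:ℝ) < x.re - c := by linarith
  have h2 : x.re - c ≤ ‖x - s‖ := by
    calc x.re - c ≤ x.re - s := by linarith
    _ = (x - (s:ℂ)).re := by simp
    _ ≤ |(x - (s:ℂ)).re| := le_abs_self _
    _ ≤ ‖x - s‖ := Complex.abs_re_le_norm _
  rw [Complex.norm_cpow_real]
  exact Real.rpow_le_rpow_of_nonpos h1 h2 hγ

lemma aux_kernel_int {a c : ℝ} (f : ℝ → ℝ) (hf : IntegrableOn f (Ioc a c))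
    (γ : ℝ) (hγ : γ ≤ 0) (x : ℂ) (hx : c < x.re) :
    IntegrableOn (fun s : ℝ => ((x - s) ^ (γ:ℂ)) * (f s : ℂ)) (Ioc a c) := by
  apply Integrable.mono' (hf.norm.const_mul ((x.re - c) ^ γ))
    (aux_kernel_meas f hf.1 _ x hx)
  filter_upwards [ae_restrict_mem measurableSet_Ioc] with s hs
  rw [norm_mul, mul_comm]
  have h3 : ‖((f s : ℝ) : ℂ)‖ = |f s| := by simp [Complex.norm_real]
  rw [h3, Real.norm_eq_abs]
  exact (mul_le_mul_of_nonneg_left (aux_abs_le hx hs.2 γ hγ) (abs_nonneg _)).trans_eq (mul_comm _ _)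

lemma aux_hasDerivAt {a c : ℝ} (hac : a ≤ c) (f : ℝ → ℝ) (hf : IntegrableOn f (Ioc a c))
    (γ : ℝ) (hγ : γ ≤ 0) (z : ℂ) (hz : c < z.re) :
    HasDerivAt (fun w : ℂ => ∫ s in a..c, ((w - s) ^ (γ:ℂ)) * (f s : ℂ))
      ((γ:ℂ) * ∫ s in a..c, ((z - s) ^ (((γ - 1 : ℝ) : ℂ))) * (f s : ℂ)) z := by
  set ε : ℝ := (z.re - c) / 2 with hε
  have hε0 : 0 < ε := by simp only [hε]; linarith
  have hball : ∀ x ∈ Metric.ball z ε, c + ε < x.re := by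
    intro x hx
    have : |x.re - z.re| ≤ ‖x - z‖ := by
      simpa using Complex.abs_re_le_norm (x - z)
    have h2 : ‖x - z‖ < ε := by rwa [Metric.mem_ball, dist_eq_norm] at hx
    have := (abs_lt.1 (this.trans_lt h2)).1
    simp only [hε] at *
    linarith
  have key := intervalIntegral.hasDerivAt_integral_of_dominated_loc_of_deriv_le
    (F := fun w s => ((w - s) ^ (γ:ℂ)) * (f s : ℂ))
    (F' := fun w s => (γ:ℂ) * (((w - s) ^ (((γ - 1 : ℝ) : ℂ))) * (f s : ℂ)))
    (x₀ := z) (a := a) (b := c) (μ := volume)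
    (bound := fun s => |γ| * ε ^ (γ - 1) * |f s|) (Metric.ball_mem_nhds z hε0) ?_ ?_ ?_ ?_ ?_ ?_
  · have h2 := key.2
    rwa [intervalIntegral.integral_const_mul] at h2
  · filter_upwards [(isOpen_lt continuous_const Complex.continuous_re).mem_nhds hz] with x hx
    simpa only [uIoc_of_le hac] using aux_kernel_meas f hf.1 (γ:ℂ) x hx
  · rw [intervalIntegrable_iff, uIoc_of_le hac]
    exact aux_kernel_int f hf γ hγ z hz
  · simp only [uIoc_of_le hac]
    exact (aux_kernel_meas f hf.1 _ z hz).const_mul _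
  · filter_upwards with s hs x hx
    have hxs : c < x.re := by have := hball x hx; linarith
    rw [uIoc_of_le hac] at hs
    have h1 : ‖(x - (s:ℂ)) ^ (((γ - 1:ℝ):ℂ))‖ ≤ (x.re - c) ^ (γ - 1) :=
      aux_abs_le hxs hs.2 (γ - 1) (by linarith)
    have h2 : (x.re - c) ^ (γ - 1) ≤ ε ^ (γ - 1) := by
      apply Real.rpow_le_rpow_of_nonpos hε0 (by have := hball x hx; linarith) (by linarith)
    have h3 : ‖((f s : ℝ) : ℂ)‖ = |f s| := by simp [Complex.norm_real]
    have h4 : ‖((γ : ℝ) : ℂ)‖ = |γ| := by simp [Complex.norm_real]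
    simp only [norm_mul, Complex.norm_real, Real.norm_eq_abs, mul_assoc]
    exact mul_le_mul_of_nonneg_left
      (mul_le_mul_of_nonneg_right (h1.trans h2) (abs_nonneg _)) (abs_nonneg γ)
  · rw [intervalIntegrable_iff, uIoc_of_le hac]
    exact (hf.norm.const_mul _)
  · filter_upwards with s hs x hx
    have hxs : c < x.re := by have := hball x hx; linarith
    rw [uIoc_of_le hac] at hs
    have hd : HasDerivAt (fun w : ℂ => (w - (s:ℂ)) ^ (γ:ℂ))
        ((γ:ℂ) * (x - (s:ℂ)) ^ ((γ:ℂ) - 1) * 1) x :=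
      ((hasDerivAt_id x).sub_const _).cpow_const (aux_slit hxs hs.2)
    have := hd.mul_const ((f s : ℂ))
    refine this.congr_deriv ?_
    have : ((γ:ℂ) - 1) = (((γ - 1 : ℝ)) : ℂ) := by push_cast; ring
    rw [this]; ring
open MeasureTheory Set Filter Polynomial

-- Step A: vanishing against continuous functions
lemma aux_cont_test {a c : ℝ} (hac : a < c) (t₀ : ℝ) (ht : c < t₀) (g : ℝ → ℝ)
    (hg : IntegrableOn g (Icc a c))
    (hmom : ∀ k : ℕ, ∫ s in Icc a c, ((t₀ - s)⁻¹) ^ k * g s = 0)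
    (ψ : ℝ → ℝ) (hψ : Continuous ψ) :
    ∫ s in Icc a c, ψ s * g s = 0 := by
  set p₁ : ℝ := (t₀ - a)⁻¹ with hp₁
  set p₂ : ℝ := (t₀ - c)⁻¹ with hp₂
  have hta : (0:ℝ) < t₀ - a := by linarith
  have htc : (0:ℝ) < t₀ - c := by linarith
  have hp₁pos : 0 < p₁ := by positivity
  have hp12 : p₁ ≤ p₂ := by
    rw [hp₁, hp₂]
    exact inv_anti₀ htc (by linarith)
  -- the continuous map χ on [p₁, p₂]
  have hyne : ∀ y : Icc p₁ p₂, (y:ℝ) ≠ 0 := fun y => (lt_of_lt_of_le hp₁pos y.2.1).ne'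
  set χ : C(Icc p₁ p₂, ℝ) := ⟨fun y => ψ (t₀ - (y:ℝ)⁻¹),
    hψ.comp (continuous_const.sub (continuous_subtype_val.inv₀ hyne))⟩ with hχ
  have hclos : χ ∈ closure ((polynomialFunctions (Icc p₁ p₂)) : Set C(Icc p₁ p₂, ℝ)) := by
    have h := polynomialFunctions_closure_eq_top p₁ p₂
    have : χ ∈ (polynomialFunctions (Icc p₁ p₂)).topologicalClosure := by
      rw [h]; trivial
    rwa [← Subalgebra.topologicalClosure_coe]
  -- key approximation bound
  have main : ∀ ε : ℝ, 0 < ε → |∫ s in Icc a c, ψ s * g s| ≤ ε * ∫ s in Icc a c, |g s| := by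
    intro ε hε
    obtain ⟨q, hq, hdq⟩ := Metric.mem_closure_iff.1 hclos ε hε
    obtain ⟨P, -, hP⟩ := Subalgebra.mem_map.1 hq
    set φ : ℝ → ℝ := fun s => (t₀ - s)⁻¹ with hφ
    have hφmem : ∀ s ∈ Icc a c, φ s ∈ Icc p₁ p₂ := by
      intro s hs
      constructor
      · exact inv_anti₀ (by linarith [hs.2]) (by linarith [hs.1])
      · exact inv_anti₀ htc (by linarith [hs.2])
    have happrox : ∀ s ∈ Icc a c, |ψ s - P.eval (φ s)| ≤ ε := by
      intro s hs
      have hy : φ s ∈ Icc p₁ p₂ := hφmem s hs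
      have h1 : dist (χ ⟨φ s, hy⟩) (q ⟨φ s, hy⟩) ≤ dist χ q := ContinuousMap.dist_apply_le_dist _
      have h2 : χ ⟨φ s, hy⟩ = ψ s := by
        simp only [hχ, ContinuousMap.coe_mk]
        congr 1
        rw [hφ]
        simp only [inv_inv]
        ring
      have h3 : q ⟨φ s, hy⟩ = P.eval (φ s) := by
        rw [← hP]
        simp [Polynomial.toContinuousMapOnAlgHom, Polynomial.toContinuousMapOn,
          Polynomial.toContinuousMap]
      rw [h2, h3, Real.dist_eq] at h1
      exact h1.trans hdq.le
    -- integrability facts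
    have hφmeas : Measurable φ := (measurable_const.sub measurable_id).inv
    have hterm : ∀ k : ℕ, IntegrableOn (fun s => (φ s) ^ k * g s) (Icc a c) := by
      intro k
      apply Integrable.mono' (hg.norm.const_mul (p₂ ^ k))
        (((hφmeas.pow_const k).aestronglyMeasurable).mul hg.1)
      filter_upwards [ae_restrict_mem measurableSet_Icc] with s hs
      simp only [Pi.mul_apply]
      have h0 : 0 ≤ φ s := le_of_lt (lt_of_lt_of_le hp₁pos (hφmem s hs).1)
      rw [norm_mul, norm_pow, Real.norm_eq_abs, _root_.abs_of_nonneg h0]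
      exact mul_le_mul_of_nonneg_right (pow_le_pow_left₀ h0 (hφmem s hs).2 k) (norm_nonneg _)
    have hPint : IntegrableOn (fun s => P.eval (φ s) * g s) (Icc a c) := by
      have : (fun s => P.eval (φ s) * g s) =
          fun s => ∑ k ∈ Finset.range (P.natDegree + 1), P.coeff k * ((φ s) ^ k * g s) := by
        funext s
        rw [Polynomial.eval_eq_sum_range, Finset.sum_mul]
        congr 1; funext k; ring
      rw [this]
      exact integrable_finset_sum _ (fun k _ => (hterm k).const_mul _)
    have hPzero : ∫ s in Icc a c, P.eval (φ s) * g s = 0 := by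
      have : (fun s => P.eval (φ s) * g s) =
          fun s => ∑ k ∈ Finset.range (P.natDegree + 1), P.coeff k * ((φ s) ^ k * g s) := by
        funext s
        rw [Polynomial.eval_eq_sum_range, Finset.sum_mul]
        congr 1; funext k; ring
      rw [this, integral_finset_sum _ (fun k _ => (hterm k).const_mul _)]
      apply Finset.sum_eq_zero
      intro k _
      rw [MeasureTheory.integral_const_mul, hmom k, mul_zero]
    have hψint : IntegrableOn (fun s => ψ s * g s) (Icc a c) := by
      obtain ⟨C, hC⟩ := (isCompact_Icc (a := a) (b := c)).exists_bound_of_continuousOn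
        hψ.continuousOn
      apply Integrable.mono' (hg.norm.const_mul C)
        ((hψ.aestronglyMeasurable).mul hg.1)
      filter_upwards [ae_restrict_mem measurableSet_Icc] with s hs
      simp only [Pi.mul_apply]
      rw [norm_mul]
      exact mul_le_mul_of_nonneg_right (hC s hs) (norm_nonneg _)
    -- the bound
    have hsub : IntegrableOn (fun s => (ψ s - P.eval (φ s)) * g s) (Icc a c) := by
      apply (hψint.sub hPint).congr
      filter_upwards with s
      simp only [Pi.sub_apply]
      ring
    have hsplit : ∫ s in Icc a c, ψ s * g s =
        (∫ s in Icc a c, (ψ s - P.eval (φ s)) * g s) + ∫ s in Icc a c, P.eval (φ s) * g s := by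
      rw [← integral_add hsub hPint]
      apply MeasureTheory.integral_congr_ae
      filter_upwards with s
      ring
    rw [hsplit, hPzero, add_zero]
    have := MeasureTheory.norm_integral_le_of_norm_le
      (f := fun s => (ψ s - P.eval (φ s)) * g s) ((hg.norm.const_mul ε))
      (by
        filter_upwards [ae_restrict_mem measurableSet_Icc] with s hs
        rw [norm_mul, Real.norm_eq_abs, Real.norm_eq_abs]
        exact mul_le_mul_of_nonneg_right (happrox s hs) (abs_nonneg _))
    rw [Real.norm_eq_abs] at this
    calc |∫ s in Icc a c, (ψ s - P.eval (φ s)) * g s|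
        ≤ ∫ s in Icc a c, ε * |g s| := this
      _ = ε * ∫ s in Icc a c, |g s| := by
          rw [MeasureTheory.integral_const_mul]
  -- conclude
  set I := ∫ s in Icc a c, ψ s * g s with hI
  set M := ∫ s in Icc a c, |g s| with hM
  have hM0 : 0 ≤ M := integral_nonneg (fun s => abs_nonneg _)
  by_contra hI0
  have hIpos : 0 < |I| := abs_pos.2 hI0
  have h1 := main (|I| / (2 * (M + 1))) (by positivity)
  have h2 : |I| / (2 * (M + 1)) * M < |I| := by
    rw [div_mul_eq_mul_div, div_lt_iff₀ (by positivity)]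
    nlinarith
  linarith

lemma aux_moments {a c : ℝ} (hac : a < c) (t₀ : ℝ) (ht : c < t₀) (g : ℝ → ℝ)
    (hg : IntegrableOn g (Icc a c))
    (hmom : ∀ k : ℕ, ∫ s in Icc a c, ((t₀ - s)⁻¹) ^ k * g s = 0) :
    ∀ᵐ s ∂(volume.restrict (Icc a c)), g s = 0 := by
  apply ae_eq_zero_of_integral_contDiff_smul_eq_zero (hg.locallyIntegrable)
  intro ψ hψ _
  have := aux_cont_test hac t₀ ht g hg hmom ψ hψ.continuous
  simpa [smul_eq_mul] using this

section
variable {a c : ℝ}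

lemma aux_cascade (hac : a ≤ c) (f : ℝ → ℝ) (hf : IntegrableOn f (Ioc a c))
    (β : ℝ) (hβ : β < 0)
    (h0 : ∀ z : ℂ, c < z.re → (∫ s in a..c, ((z - s) ^ ((β:ℂ))) * (f s : ℂ)) = 0)
    (aux_hasDerivAt : ∀ (γ : ℝ), γ ≤ 0 → ∀ (z : ℂ), c < z.re →
      HasDerivAt (fun w : ℂ => ∫ s in a..c, ((w - s) ^ (γ:ℂ)) * (f s : ℂ))
      ((γ:ℂ) * ∫ s in a..c, ((z - s) ^ (((γ - 1 : ℝ) : ℂ))) * (f s : ℂ)) z) :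
    ∀ (k : ℕ) (z : ℂ), c < z.re →
      (∫ s in a..c, ((z - s) ^ (((β - k : ℝ) : ℂ))) * (f s : ℂ)) = 0 := by
  intro k
  induction k with
  | zero =>
    intro z hz
    have e : (((β - (0:ℕ) : ℝ)) : ℂ) = ((β : ℝ) : ℂ) := by norm_num
    simp only [e]
    exact h0 z hz
  | succ k ih =>
    intro z hz
    have hck : (0:ℝ) ≤ (k:ℝ) := Nat.cast_nonneg k
    have hβk : (β - k : ℝ) ≤ 0 := by linarith
    have hd := aux_hasDerivAt (β - k) hβk z hz
    have hev : (fun w : ℂ => ∫ s in a..c, ((w - s) ^ (((β - k : ℝ)) : ℂ)) * (f s : ℂ))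
        =ᶠ[nhds z] (fun _ => (0:ℂ)) := by
      filter_upwards [(isOpen_lt continuous_const Complex.continuous_re).mem_nhds hz] with w hw
      exact ih w hw
    have hder0 : deriv (fun w : ℂ =>
        ∫ s in a..c, ((w - s) ^ (((β - k : ℝ)) : ℂ)) * (f s : ℂ)) z = 0 := by
      rw [hev.deriv_eq]
      simp
    rw [hd.deriv] at hder0
    have hne : (((β - k : ℝ)) : ℂ) ≠ 0 := by
      simp only [ne_eq, Complex.ofReal_eq_zero]
      intro h
      linarith [h ▸ hβ]
    rcases mul_eq_zero.1 hder0 with h | h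
    · exact absurd h hne
    · have e : (((β - ((k+1:ℕ)) : ℝ)) : ℂ) = (((β - k : ℝ) - 1 : ℝ) : ℂ) := by
        push_cast; ring
      simp only [e]
      exact h

lemma aux_vanish (hac : a < c) (f : ℝ → ℝ) (hf : IntegrableOn f (Ioc a c))
    (β : ℝ) (hβ : β < 0)
    (h0 : ∀ z : ℂ, c < z.re → (∫ s in a..c, ((z - s) ^ ((β:ℂ))) * (f s : ℂ)) = 0)
    (aux_hasDerivAt : ∀ (γ : ℝ), γ ≤ 0 → ∀ (z : ℂ), c < z.re →
      HasDerivAt (fun w : ℂ => ∫ s in a..c, ((w - s) ^ (γ:ℂ)) * (f s : ℂ))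
      ((γ:ℂ) * ∫ s in a..c, ((z - s) ^ (((γ - 1 : ℝ) : ℂ))) * (f s : ℂ)) z)
    (aux_moments : ∀ (t₀ : ℝ), c < t₀ → ∀ (g : ℝ → ℝ), IntegrableOn g (Icc a c) →
      (∀ k : ℕ, ∫ s in Icc a c, ((t₀ - s)⁻¹) ^ k * g s = 0) →
      (∀ᵐ s ∂(volume.restrict (Icc a c)), g s = 0)) :
    ∀ᵐ s ∂(volume.restrict (Icc a c)), f s = 0 := by
  set t₀ : ℝ := c + 1 with ht₀
  have ht : c < t₀ := by simp [ht₀]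
  set g : ℝ → ℝ := fun s => (t₀ - s) ^ β * f s with hgdef
  have hmeasg : AEStronglyMeasurable g (volume.restrict (Ioc a c)) := by
    apply AEStronglyMeasurable.mul _ hf.1
    apply ContinuousOn.aestronglyMeasurable _ measurableSet_Ioc
    intro s hs
    have hne : t₀ - s ≠ 0 := by
      have : s ≤ c := hs.2
      simp only [ht₀]
      intro h
      linarith [sub_eq_zero.1 h]
    exact ((Real.continuousAt_rpow_const (t₀ - s) β (Or.inl hne)).comp
      ((continuous_const.sub continuous_id).continuousAt)).continuousWithinAt
  have hg : IntegrableOn g (Icc a c) := by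
    rw [integrableOn_Icc_iff_integrableOn_Ioc]
    apply Integrable.mono' (hf.norm.const_mul 1) hmeasg
    filter_upwards [ae_restrict_mem measurableSet_Ioc] with s hs
    have h1 : (1:ℝ) ≤ t₀ - s := by simp only [ht₀]; linarith [hs.2]
    rw [hgdef]
    simp only [norm_mul, Real.norm_eq_abs]
    have h2 : |(t₀ - s) ^ β| ≤ 1 := by
      rw [_root_.abs_of_nonneg (Real.rpow_nonneg (by linarith) β)]
      exact Real.rpow_le_one_of_one_le_of_nonpos h1 hβ.le
    calc |(t₀ - s) ^ β| * |f s| ≤ 1 * |f s| :=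
          mul_le_mul_of_nonneg_right h2 (abs_nonneg _)
      _ = 1 * ‖f s‖ := rfl
  -- moments
  have hmom : ∀ k : ℕ, ∫ s in Icc a c, ((t₀ - s)⁻¹) ^ k * g s = 0 := by
    intro k
    have hz : c < ((t₀ : ℂ)).re := by simpa using ht
    have hcx := aux_cascade hac.le f hf β hβ h0 aux_hasDerivAt k (t₀ : ℂ) hz
    -- turn the complex integral into a real one
    have he : Set.EqOn (fun s : ℝ => (((t₀:ℂ) - s) ^ (((β - k : ℝ)) : ℂ)) * (f s : ℂ))
        (fun s : ℝ => (((t₀ - s) ^ (β - k) * f s : ℝ) : ℂ)) (Set.uIcc a c) := by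
      intro s hs
      rw [Set.uIcc_of_le hac.le] at hs
      have hpos : (0:ℝ) ≤ t₀ - s := by simp only [ht₀]; linarith [hs.2]
      have e1 : ((t₀:ℂ) - (s:ℂ)) = ((t₀ - s : ℝ) : ℂ) := by push_cast; ring
      simp only [e1, ← Complex.ofReal_cpow hpos, ← Complex.ofReal_mul]
    rw [intervalIntegral.integral_congr (μ := volume) he] at hcx
    rw [intervalIntegral.integral_ofReal] at hcx
    have hreal : ∫ s in a..c, (t₀ - s) ^ (β - k) * f s = 0 := by
      exact_mod_cast hcx
    rw [intervalIntegral.integral_of_le hac.le] at hreal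
    rw [MeasureTheory.integral_Icc_eq_integral_Ioc]
    rw [← hreal]
    apply setIntegral_congr_ae measurableSet_Ioc
    filter_upwards with s hs
    have hpos : (0:ℝ) < t₀ - s := by simp only [ht₀]; linarith [hs.2]
    rw [hgdef]
    have e2 : (t₀ - s) ^ (β - (k:ℝ)) = ((t₀ - s)⁻¹) ^ k * ((t₀ - s) ^ β) := by
      rw [show β - (k:ℝ) = -(k:ℝ) + β by ring, Real.rpow_add hpos,
        Real.rpow_neg hpos.le, Real.rpow_natCast, ← inv_pow]
    rw [e2]
    ring
  have hgz := aux_moments t₀ ht g hg hmom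
  filter_upwards [hgz, ae_restrict_mem measurableSet_Icc] with s hs1 hs2
  have hpos : (0:ℝ) < t₀ - s := by simp only [ht₀]; linarith [hs2.2]
  have := Real.rpow_pos_of_pos hpos β
  rw [hgdef] at hs1
  simp only [mul_eq_zero] at hs1
  rcases hs1 with h | h
  · exact absurd h this.ne'
  · exact h
end

lemma aux_dense {l r : ℝ} (hlr : l < r) (Z : Set ℝ) (hZ : volume ((Icc l r) \ Z) = 0) :
    Icc l r ⊆ closure (Z ∩ Icc l r) := by
  intro t ht
  rw [_root_.mem_closure_iff]
  intro O hO htO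
  obtain ⟨ε, hε, hball⟩ := Metric.isOpen_iff.1 hO t htO
  set l' := max l (t - ε/2) with hl'
  set r' := min r (t + ε/2) with hr'
  have h1 : l' < r' :=
    max_lt (lt_min hlr (by linarith [ht.1])) (lt_min (by linarith [ht.2]) (by linarith))
  have hsub2 : Ioo l' r' ⊆ Icc l r := fun y hy =>
    ⟨le_of_lt (lt_of_le_of_lt (le_max_left _ _) hy.1),
     le_of_lt (lt_of_lt_of_le hy.2 (min_le_left _ _))⟩
  have hioo : ¬ Ioo l' r' ⊆ (Icc l r \ Z) := by
    intro hss
    have h2 : volume (Ioo l' r') = 0 := le_antisymm (hZ ▸ measure_mono hss) zero_le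
    rw [Real.volume_Ioo] at h2
    rw [ENNReal.ofReal_eq_zero] at h2
    linarith
  obtain ⟨y, hy1, hy2⟩ := not_subset.1 hioo
  have hyIcc := hsub2 hy1
  have hyZ : y ∈ Z := by
    by_contra hyZ
    exact hy2 ⟨hyIcc, hyZ⟩
  refine ⟨y, hball ?_, hyZ, hyIcc⟩
  rw [Metric.mem_ball, Real.dist_eq, abs_lt]
  constructor <;>
    [linarith [le_max_right l (t - ε/2), hy1.1]; linarith [min_le_right r (t + ε/2), hy1.2]]

theorem stmt_10 (n : ℕ) (hn : 1 ≤ n) (a b : ℝ) (hab : a < b)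
    (α : ℝ) (hα0 : 0 < α) (hα1 : α < 1)
    (u : ℝ → EuclideanSpace ℝ (Fin n)) (hu : IntegrableOn u (Icc a b))
    (x : ℝ → EuclideanSpace ℝ (Fin n)) (hx : ContinuousOn x (Icc a b))
    (hxu : ∀ᵐ t ∂(volume.restrict (Icc a b)),
      x t = x a + ∫ s in a..t, ((t - s) ^ (α - 1) / Real.Gamma α) • u s)
    (c d : ℝ) (hac : a ≤ c) (hcd : c < d) (hdb : d ≤ b)
    (hpoly : ∀ i : Fin n, ∃ p : Polynomial ℝ, ∀ t ∈ Icc c d, x t i = Polynomial.eval t p)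
    (hu0 : ∀ᵐ t ∂(volume.restrict (Icc c d)), u t = 0) :
    ∀ t ∈ Icc a d, x t = x a := by
  have hΓ : 0 < Real.Gamma α := Real.Gamma_pos_of_pos hα0
  have hcb : c ≤ b := le_trans hcd.le hdb
  have huIoc : IntegrableOn u (Ioc a c) :=
    hu.mono_set (fun s hs => ⟨hs.1.le, hs.2.trans hcb⟩)
  set U : Set ℂ := {z : ℂ | c < z.re} with hUdef
  have hUopen : IsOpen U := isOpen_lt continuous_const Complex.continuous_re
  have hUconn : IsPreconnected U := (convex_halfSpace_re_gt c).isPreconnected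
  have hα1' : α - 1 ≤ 0 := by linarith
  have key : ∀ i : Fin n, (∀ t ∈ Icc c d, x t i = x a i) ∧
      (∀ᵐ s ∂(volume.restrict (Icc a c)), u s i = 0) := by
    intro i
    obtain ⟨p, hp⟩ := hpoly i
    set f : ℝ → ℝ := fun s => u s i with hfdef
    have hfi : IntegrableOn f (Ioc a c) :=
      (EuclideanSpace.proj (𝕜 := ℝ) i).integrable_comp huIoc
    set G : ℝ → ℝ := fun t => ∫ s in a..c, (t - s) ^ (α - 1) * f s with hGdef
    set H : ℂ → ℂ := fun w => ∫ s in a..c, ((w - s) ^ (((α - 1 : ℝ)) : ℂ)) * (f s : ℂ) with hHdef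
    have hHd : ∀ (γ : ℝ), γ ≤ 0 → ∀ (z : ℂ), c < z.re →
        HasDerivAt (fun w : ℂ => ∫ s in a..c, ((w - s) ^ ((γ : ℝ) : ℂ)) * (f s : ℂ))
          ((γ:ℂ) * ∫ s in a..c, ((z - s) ^ (((γ - 1 : ℝ)) : ℂ)) * (f s : ℂ)) z :=
      fun γ hγ z hz => aux_hasDerivAt hac f hfi γ hγ z hz
    -- the a.e. identity on (c,d)
    have hae : ∀ᵐ t ∂(volume.restrict (Ioo c d)),
        Real.Gamma α * (Polynomial.eval t p - x a i) = G t := by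
      have h1 := ae_restrict_of_ae_restrict_of_subset
        (Set.Ioo_subset_Icc_self.trans (Set.Icc_subset_Icc hac hdb)) hxu
      filter_upwards [h1, ae_restrict_mem measurableSet_Ioo] with t hxt ht
      have hIac : IntervalIntegrable (fun s => ((t - s) ^ (α - 1) / Real.Gamma α) • u s)
          volume a c := by
        rw [intervalIntegrable_iff, uIoc_of_le hac]
        apply Integrable.mono' ((huIoc.norm).const_mul ((t - c) ^ (α - 1) / Real.Gamma α))
        · apply AEStronglyMeasurable.fun_smul _ huIoc.1
          apply ContinuousOn.aestronglyMeasurable _ measurableSet_Ioc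
          intro s hs
          have hne : t - s ≠ 0 := by
            have := hs.2; have := ht.1
            intro h
            have := sub_eq_zero.1 h
            linarith
          exact (((Real.continuousAt_rpow_const (t - s) (α - 1) (Or.inl hne)).comp
            ((continuous_const.sub continuous_id).continuousAt)).div_const _).continuousWithinAt
        · filter_upwards [ae_restrict_mem measurableSet_Ioc] with s hs
          rw [norm_smul]
          have h2 : 0 < t - c := by linarith [ht.1]
          have h3 : (t - s) ^ (α - 1) ≤ (t - c) ^ (α - 1) :=
            Real.rpow_le_rpow_of_nonpos h2 (by linarith [hs.2]) hα1'
          have h4 : (0:ℝ) ≤ (t - s) ^ (α - 1) :=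
            Real.rpow_nonneg (by linarith [hs.2, ht.1]) _
          rw [Real.norm_eq_abs, abs_div, _root_.abs_of_nonneg h4, _root_.abs_of_nonneg hΓ.le]
          have h5 : (t - s) ^ (α - 1) / Real.Gamma α ≤ (t - c) ^ (α - 1) / Real.Gamma α := by
            gcongr
          exact mul_le_mul_of_nonneg_right h5 (norm_nonneg _)
      have hIct0 : ∀ᵐ s : ℝ, s ∈ Set.uIoc c t → ((t - s) ^ (α - 1) / Real.Gamma α) • u s = 0 := by
        have h5 : ∀ᵐ s : ℝ, s ∈ Icc c d → u s = 0 :=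
          (ae_restrict_iff' measurableSet_Icc).1 hu0
        filter_upwards [h5] with s h5s hs
        rw [uIoc_of_le ht.1.le] at hs
        rw [h5s ⟨hs.1.le, hs.2.trans ht.2.le⟩, smul_zero]
      have hIct : IntervalIntegrable (fun s => ((t - s) ^ (α - 1) / Real.Gamma α) • u s)
          volume c t := by
        rw [intervalIntegrable_iff]
        apply (integrable_zero _ _ _).congr
        rw [Filter.EventuallyEq]
        filter_upwards [(ae_restrict_iff' measurableSet_uIoc).2 hIct0] with s hs
        exact hs.symm
      have hct0 : (∫ s in c..t, ((t - s) ^ (α - 1) / Real.Gamma α) • u s) = 0 := by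
        rw [intervalIntegral.integral_congr_ae
          (g := fun _ => (0 : EuclideanSpace ℝ (Fin n))) hIct0]
        simp
      have hsplit := intervalIntegral.integral_add_adjacent_intervals hIac hIct
      rw [hct0, add_zero] at hsplit
      rw [← hsplit] at hxt
      have h6 : (∫ s in a..c, ((t - s) ^ (α - 1) / Real.Gamma α) • u s) i
          = ∫ s in a..c, ((t - s) ^ (α - 1) / Real.Gamma α) * f s := by
        have h7 := ContinuousLinearMap.intervalIntegral_comp_comm
          (EuclideanSpace.proj (𝕜 := ℝ) i) hIac
        calc (∫ s in a..c, ((t - s) ^ (α - 1) / Real.Gamma α) • u s) i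
            = (EuclideanSpace.proj (𝕜 := ℝ) i)
              (∫ s in a..c, ((t - s) ^ (α - 1) / Real.Gamma α) • u s) := rfl
          _ = ∫ s in a..c, (EuclideanSpace.proj (𝕜 := ℝ) i)
              (((t - s) ^ (α - 1) / Real.Gamma α) • u s) := h7.symm
          _ = ∫ s in a..c, ((t - s) ^ (α - 1) / Real.Gamma α) * f s := by
              apply intervalIntegral.integral_congr
              intro s _
              simp [hfdef, smul_eq_mul]
      have h8 : ∫ s in a..c, ((t - s) ^ (α - 1) / Real.Gamma α) * f s
          = (Real.Gamma α)⁻¹ * G t := by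
        rw [hGdef, ← intervalIntegral.integral_const_mul]
        apply intervalIntegral.integral_congr
        intro s _
        ring
      have h9 : Polynomial.eval t p = x a i + (Real.Gamma α)⁻¹ * G t := by
        calc Polynomial.eval t p = x t i := (hp t ⟨ht.1.le, ht.2.le⟩).symm
          _ = x a i + (∫ s in a..c, ((t - s) ^ (α - 1) / Real.Gamma α) • u s) i := by
              rw [hxt]; rfl
          _ = x a i + (Real.Gamma α)⁻¹ * G t := by rw [h6, h8]
      rw [h9]
      field_simp
      ring
    -- analytic function Φ
    set q := p.map (algebraMap ℝ ℂ) with hqdef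
    set Φ : ℂ → ℂ := fun z => (Real.Gamma α : ℂ) * (q.eval z - ((x a i : ℝ) : ℂ)) - H z
      with hΦdef
    have hΦanal : AnalyticOnNhd ℂ Φ U := by
      apply DifferentiableOn.analyticOnNhd _ hUopen
      intro z hz
      apply DifferentiableAt.differentiableWithinAt
      apply DifferentiableAt.sub
      · exact ((q.differentiable.differentiableAt.sub_const _).const_mul _)
      · exact (hHd (α - 1) hα1' z hz).differentiableAt
    have hqeval : ∀ t : ℝ, q.eval (t : ℂ) = ((Polynomial.eval t p : ℝ) : ℂ) := by
      intro t
      rw [hqdef, Polynomial.eval_map]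
      exact Polynomial.eval₂_at_apply (algebraMap ℝ ℂ) t
    have hHreal : ∀ t : ℝ, c < t → H (t : ℂ) = ((G t : ℝ) : ℂ) := by
      intro t htc
      have he : Set.EqOn (fun s : ℝ => (((t:ℂ) - s) ^ (((α - 1 : ℝ)) : ℂ)) * (f s : ℂ))
          (fun s : ℝ => (((t - s) ^ (α - 1) * f s : ℝ) : ℂ)) (Set.uIcc a c) := by
        intro s hs
        rw [Set.uIcc_of_le hac] at hs
        have hpos : (0:ℝ) ≤ t - s := by linarith [hs.2]
        have e1 : ((t:ℂ) - (s:ℂ)) = ((t - s : ℝ) : ℂ) := by push_cast; ring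
        simp only [e1, ← Complex.ofReal_cpow hpos, ← Complex.ofReal_mul]
      rw [hHdef, hGdef]
      simp only []
      rw [intervalIntegral.integral_congr (μ := volume) he, intervalIntegral.integral_ofReal]
    have hΦreal : ∀ t : ℝ, t ∈ Icc c d → c < t →
        (Real.Gamma α * (Polynomial.eval t p - x a i) = G t) → Φ ((t:ℝ) : ℂ) = 0 := by
      intro t htcd htc hZt
      rw [hΦdef]
      simp only []
      rw [hqeval t, hHreal t htc]
      rw [← Complex.ofReal_sub, ← Complex.ofReal_mul, ← Complex.ofReal_sub]
      rw [Complex.ofReal_eq_zero]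
      rw [hZt]
      ring
    -- frequently zero at (c+d)/2
    set m : ℝ := (c + d) / 2 with hmdef
    have hcm : c < m := by rw [hmdef]; linarith
    have hmd : m < d := by rw [hmdef]; linarith
    have hfreq : ∃ᶠ z in nhdsWithin ((m : ℝ) : ℂ) {((m:ℝ) : ℂ)}ᶜ, Φ z = 0 := by
      set d' : ℝ := (m + d) / 2 with hd'def
      have hmd' : m < d' := by rw [hd'def]; linarith
      have hd'd : d' < d := by rw [hd'def]; linarith
      set Z : Set ℝ := {t | Real.Gamma α * (Polynomial.eval t p - x a i) = G t} with hZdef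
      have hZ0 : volume (Icc m d' \ (Z \ {m})) = 0 := by
        have h7 : volume ({t | ¬ (Real.Gamma α * (Polynomial.eval t p - x a i) = G t)}
            ∩ Ioo c d) = 0 := by
          have h7a := hae
          rw [MeasureTheory.ae_iff, Measure.restrict_apply' measurableSet_Ioo] at h7a
          exact h7a
        apply measure_mono_null _
          (measure_union_null h7 (measure_singleton (m : ℝ)))
        intro s hs
        rcases eq_or_ne s m with hsm | hsm
        · exact Or.inr (by simp [hsm])
        · left
          refine ⟨fun hsz => hs.2 ⟨hsz, hsm⟩, ?_⟩
          exact ⟨lt_of_lt_of_le hcm hs.1.1, lt_of_le_of_lt hs.1.2 hd'd⟩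
      have hdense := aux_dense hmd' (Z \ {m}) hZ0 (left_mem_Icc.2 hmd'.le)
      obtain ⟨y, hy, hylim⟩ := mem_closure_iff_seq_limit.1 hdense
      have htend : Filter.Tendsto (fun k => ((y k : ℝ) : ℂ)) Filter.atTop
          (nhdsWithin ((m : ℝ) : ℂ) {((m:ℝ) : ℂ)}ᶜ) := by
        rw [tendsto_nhdsWithin_iff]
        constructor
        · exact (Complex.continuous_ofReal.tendsto m).comp hylim
        · filter_upwards with k
          simp only [Set.mem_compl_iff, Set.mem_singleton_iff]
          intro h
          exact (hy k).1.2 (by simpa using Complex.ofReal_inj.1 h)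
      apply htend.frequently
      apply Filter.Frequently.of_forall
      intro k
      have hyk := hy k
      have hykI : y k ∈ Icc c d := ⟨(hcm.trans_le hyk.2.1).le, hyk.2.2.trans hd'd.le⟩
      exact hΦreal (y k) hykI (hcm.trans_le hyk.2.1) hyk.1.1
    have hΦ0 : Set.EqOn Φ 0 U :=
      hΦanal.eqOn_zero_of_preconnected_of_frequently_eq_zero hUconn
        (show ((m:ℝ):ℂ) ∈ U by simp only [hUdef, Set.mem_setOf_eq, Complex.ofReal_re]; exact hcm)
        hfreq
    -- identity for all real t > c
    have hall : ∀ t : ℝ, c < t → Real.Gamma α * (Polynomial.eval t p - x a i) = G t := by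
      intro t htc
      have h8 := hΦ0 (show ((t:ℝ):ℂ) ∈ U by
        simp only [hUdef, Set.mem_setOf_eq, Complex.ofReal_re]; exact htc)
      rw [hΦdef] at h8
      simp only [Pi.zero_apply] at h8
      rw [hqeval t, hHreal t htc] at h8
      rw [← Complex.ofReal_sub, ← Complex.ofReal_mul, ← Complex.ofReal_sub,
        Complex.ofReal_eq_zero] at h8
      linarith [h8]
    -- limit of G at infinity
    set M : ℝ := ∫ s in Ioc a c, ‖f s‖ with hMdef
    have hGb : ∀ t : ℝ, c < t → ‖G t‖ ≤ (t - c) ^ (α - 1) * M := by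
      intro t htc
      rw [hGdef]
      simp only []
      rw [intervalIntegral.integral_of_le hac]
      have hb := MeasureTheory.norm_integral_le_of_norm_le
        (f := fun s => (t - s) ^ (α - 1) * f s)
        (g := fun s => (t - c) ^ (α - 1) * ‖f s‖)
        (hfi.norm.const_mul _)
        (by
          filter_upwards [ae_restrict_mem measurableSet_Ioc] with s hs
          rw [norm_mul]
          have h2 : 0 < t - c := by linarith
          have h3 : (t - s) ^ (α - 1) ≤ (t - c) ^ (α - 1) :=
            Real.rpow_le_rpow_of_nonpos h2 (by linarith [hs.2]) hα1'
          have h4 : (0:ℝ) ≤ (t - s) ^ (α - 1) :=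
            Real.rpow_nonneg (by linarith [hs.2]) _
          rw [Real.norm_eq_abs, _root_.abs_of_nonneg h4]
          exact mul_le_mul_of_nonneg_right h3 (norm_nonneg _))
      rw [MeasureTheory.integral_const_mul] at hb
      exact hb
    have h9 : Filter.Tendsto (fun t : ℝ => (t - c) ^ (α - 1) * M) Filter.atTop (nhds 0) := by
      have h9a : Filter.Tendsto (fun t : ℝ => t - c) Filter.atTop Filter.atTop := by
        simpa [sub_eq_add_neg] using
          Filter.tendsto_atTop_add_const_right Filter.atTop (-c) Filter.tendsto_id
      have h9b := (tendsto_rpow_neg_atTop (y := 1 - α) (by linarith)).comp h9a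
      have h9c : Filter.Tendsto (fun t : ℝ => (t - c) ^ (α - 1)) Filter.atTop (nhds 0) := by
        have e : (fun t : ℝ => (t - c) ^ (α - 1))
            = fun t : ℝ => (t - c) ^ (-(1 - α)) := by
          funext t; congr 1; ring
        rw [e]
        exact h9b
      simpa using h9c.mul_const M
    have hGlim : Filter.Tendsto G Filter.atTop (nhds 0) :=
      squeeze_zero_norm' ((Filter.eventually_gt_atTop c).mono fun t htc => hGb t htc) h9
    have hplim : Filter.Tendsto (fun t : ℝ => Polynomial.eval t p) Filter.atTop
        (nhds (x a i)) := by
      have h11 : (fun t : ℝ => Polynomial.eval t p)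
          =ᶠ[Filter.atTop] (fun t => x a i + (Real.Gamma α)⁻¹ * G t) := by
        filter_upwards [Filter.eventually_gt_atTop c] with t htc
        have := hall t htc
        field_simp at this ⊢
        linarith
      rw [Filter.tendsto_congr' h11]
      have := (hGlim.const_mul (Real.Gamma α)⁻¹).const_add (x a i)
      simpa using this
    have hdeg : p.degree ≤ 0 := by
      by_contra hdeg
      push_neg at hdeg
      exact not_tendsto_atTop_of_tendsto_nhds hplim.abs (p.abs_tendsto_atTop hdeg)
    obtain ⟨k, hk⟩ : ∃ k, p = Polynomial.C k := ⟨p.coeff 0, p.eq_C_of_degree_le_zero hdeg⟩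
    have hkval : k = x a i := by
      refine tendsto_nhds_unique ?_ hplim
      rw [hk]
      simpa using (tendsto_const_nhds : Filter.Tendsto (fun _ : ℝ => k) Filter.atTop (nhds k))
    have hxcd : ∀ t ∈ Icc c d, x t i = x a i := by
      intro t htcd
      rw [hp t htcd, hk, Polynomial.eval_C, hkval]
    refine ⟨hxcd, ?_⟩
    rcases eq_or_lt_of_le hac with heq | hlt
    · have hnull : volume (Icc a c) = 0 := by rw [← heq]; simp
      rw [Measure.restrict_eq_zero.2 hnull]
      simp
    · have hH0 : ∀ z : ℂ, c < z.re →
          (∫ s in a..c, ((z - s) ^ (((α - 1 : ℝ)) : ℂ)) * (f s : ℂ)) = 0 := by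
        intro z hz
        have h8 := hΦ0 (show z ∈ U from hz)
        rw [hΦdef] at h8
        simp only [Pi.zero_apply] at h8
        have h9' : q.eval z = ((x a i : ℝ) : ℂ) := by
          rw [hqdef, hk, Polynomial.map_C, Polynomial.eval_C, hkval]
          exact congrFun Complex.coe_algebraMap (x a i)
        rw [h9'] at h8
        simp only [sub_self, mul_zero, zero_sub, neg_eq_zero] at h8
        rw [hHdef] at h8
        exact h8
      exact aux_vanish hlt f hfi (α - 1) (by linarith) hH0 hHd
        (fun t₀ ht₀ g hg hmom => aux_moments hlt t₀ ht₀ g hg hmom)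
  -- combine components
  have huac : ∀ᵐ s ∂(volume.restrict (Icc a c)), u s = 0 := by
    have hall := MeasureTheory.ae_all_iff.2 (fun i : Fin n => (key i).2)
    filter_upwards [hall] with s hs
    ext j
    exact hs j
  have hxac : ∀ᵐ t ∂(volume.restrict (Icc a c)), x t = x a := by
    have h1 := ae_restrict_of_ae_restrict_of_subset (Set.Icc_subset_Icc le_rfl hcb) hxu
    have h2 : ∀ᵐ s : ℝ, s ∈ Icc a c → u s = 0 :=
      (ae_restrict_iff' measurableSet_Icc).1 huac
    filter_upwards [h1, ae_restrict_mem measurableSet_Icc] with t hxt ht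
    rw [hxt]
    have h3 : (∫ s in a..t, ((t - s) ^ (α - 1) / Real.Gamma α) • u s) = 0 := by
      rw [intervalIntegral.integral_congr_ae
        (g := fun _ => (0 : EuclideanSpace ℝ (Fin n)))
        (by
          filter_upwards [h2] with s h2s hs
          rw [uIoc_of_le ht.1] at hs
          rw [h2s ⟨hs.1.le, hs.2.trans ht.2⟩, smul_zero])]
      simp
    rw [h3, add_zero]
  intro t ht
  rcases le_or_gt t c with htc | htc
  · rcases eq_or_lt_of_le hac with heq | hlt
    · have : t = a := le_antisymm (heq ▸ htc) ht.1
      rw [this]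
    · set Z : Set ℝ := {s | x s = x a} with hZdef
      have hZ0 : volume (Icc a c \ Z) = 0 := by
        have h4 := hxac
        rw [MeasureTheory.ae_iff, Measure.restrict_apply' measurableSet_Icc] at h4
        apply measure_mono_null _ h4
        intro s hs
        exact ⟨hs.2, hs.1⟩
      have hcl := aux_dense hlt Z hZ0 (⟨ht.1, htc⟩ : t ∈ Icc a c)
      have heqon : Set.EqOn x (fun _ => x a) (Z ∩ Icc a c) := fun s hs => hs.1
      have hclsub : closure (Z ∩ Icc a c) ⊆ Icc a c :=
        closure_minimal inter_subset_right isClosed_Icc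
      have hxc : ContinuousOn x (closure (Z ∩ Icc a c)) :=
        hx.mono (hclsub.trans (Set.Icc_subset_Icc le_rfl hcb))
      exact (heqon.of_subset_closure hxc continuousOn_const subset_closure subset_rfl) hcl
  · have htcd : t ∈ Icc c d := ⟨htc.le, ht.2⟩
    ext j
    exact (key j).1 t htcd
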